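/- arXiv:0807.4731 — 6 statements merged into one kernel-verified Lean document; each statement's English description precedes it below -/
import Mathlib

section
/- Fix t > 0. Let γ : [0, t] → ℝ be continuous and let (x, y, θ) : [0, t] → ℝ³ solve x' = sin(γ/2) cos θ, y' = sin(γ/2) sin θ, θ' = −cos(γ/2), with x(0) = y(0) = θ(0) = 0. Define γ¹(s) = γ(t−s) and let (x¹, y¹, θ¹) solve the same system with γ replaced by γ¹ and zero initial conditions. Then for all s ∈ [0, t]: θ¹(s) = θ(t) − θ(t−s), x¹(s) = cos θ(t)·(x(t) − x(t−s)) + sin θ(t)·(y(t) − y(t−s)), and y¹(s) = sin θ(t)·(x(t) − x(t−s)) − cos θ(t)·(y(t) − y(t−s)). -/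
open Real Set

theorem reflection_eps1_horizontal (t : ℝ) (ht : 0 < t)
    (γ x y θ x1 y1 θ1 : ℝ → ℝ)
    (hγcont : Continuous γ)
    (hx : ∀ s ∈ Icc 0 t, HasDerivAt x (Real.sin (γ s / 2) * Real.cos (θ s)) s)
    (hy : ∀ s ∈ Icc 0 t, HasDerivAt y (Real.sin (γ s / 2) * Real.sin (θ s)) s)
    (hθ : ∀ s ∈ Icc 0 t, HasDerivAt θ (-Real.cos (γ s / 2)) s)
    (hx0 : x 0 = 0) (hy0 : y 0 = 0) (hθ0 : θ 0 = 0)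
    (hx1 : ∀ s ∈ Icc 0 t, HasDerivAt x1 (Real.sin (γ (t - s) / 2) * Real.cos (θ1 s)) s)
    (hy1 : ∀ s ∈ Icc 0 t, HasDerivAt y1 (Real.sin (γ (t - s) / 2) * Real.sin (θ1 s)) s)
    (hθ1 : ∀ s ∈ Icc 0 t, HasDerivAt θ1 (-Real.cos (γ (t - s) / 2)) s)
    (hx10 : x1 0 = 0) (hy10 : y1 0 = 0) (hθ10 : θ1 0 = 0) :
    ∀ s ∈ Icc 0 t,
      θ1 s = θ t - θ (t - s) ∧
      x1 s = Real.cos (θ t) * (x t - x (t - s)) + Real.sin (θ t) * (y t - y (t - s)) ∧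
      y1 s = Real.sin (θ t) * (x t - x (t - s)) - Real.cos (θ t) * (y t - y (t - s)) := by
  have hmem : ∀ s ∈ Icc (0:ℝ) t, t - s ∈ Icc (0:ℝ) t := by
    intro s hs
    exact ⟨by linarith [hs.2], by linarith [hs.1]⟩
  have hneg : ∀ s : ℝ, HasDerivAt (fun u : ℝ => t - u) (-1) s := by
    intro s
    simpa using (hasDerivAt_id s).const_sub t
  have key : ∀ f : ℝ → ℝ, (∀ s ∈ Icc (0:ℝ) t, HasDerivAt f 0 s) →
      ∀ s ∈ Icc (0:ℝ) t, f s = f 0 := by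
    intro f hf s hs
    exact constant_of_has_deriv_right_zero
      (fun u hu => (hf u hu).continuousAt.continuousWithinAt)
      (fun u hu => (hf u (Ico_subset_Icc_self hu)).hasDerivWithinAt) s hs
  -- composed derivatives
  have hθd : ∀ s ∈ Icc (0:ℝ) t,
      HasDerivAt (fun u => θ (t - u)) (Real.cos (γ (t - s) / 2)) s := by
    intro s hs
    have := (hθ (t - s) (hmem s hs)).comp s (hneg s)
    exact this.congr_deriv (by ring)
  have hxd : ∀ s ∈ Icc (0:ℝ) t,
      HasDerivAt (fun u => x (t - u))
        (-(Real.sin (γ (t - s) / 2) * Real.cos (θ (t - s)))) s := by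
    intro s hs
    have := (hx (t - s) (hmem s hs)).comp s (hneg s)
    exact this.congr_deriv (by ring)
  have hyd : ∀ s ∈ Icc (0:ℝ) t,
      HasDerivAt (fun u => y (t - u))
        (-(Real.sin (γ (t - s) / 2) * Real.sin (θ (t - s)))) s := by
    intro s hs
    have := (hy (t - s) (hmem s hs)).comp s (hneg s)
    exact this.congr_deriv (by ring)
  -- θ1
  have hθeq : ∀ s ∈ Icc (0:ℝ) t, θ1 s = θ t - θ (t - s) := by
    have h := key (fun u => θ1 u - (θ t - θ (t - u))) (by
      intro s hs
      have h1 := (hθ1 s hs).sub ((hasDerivAt_const s (θ t)).sub (hθd s hs))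
      exact h1.congr_deriv (by ring))
    intro s hs
    have := h s hs
    simp only [sub_zero, hθ10, hx10, hy10, sub_self, mul_zero, add_zero, zero_add,
      zero_sub, neg_zero, sub_zero] at this
    linarith
  -- x1
  have hxeq : ∀ s ∈ Icc (0:ℝ) t,
      x1 s = Real.cos (θ t) * (x t - x (t - s)) + Real.sin (θ t) * (y t - y (t - s)) := by
    have h := key (fun u => x1 u - (Real.cos (θ t) * (x t - x (t - u)) +
        Real.sin (θ t) * (y t - y (t - u)))) (by
      intro s hs
      have h1 := (hx1 s hs).sub
        ((((hasDerivAt_const s (x t)).sub (hxd s hs)).const_mul (Real.cos (θ t))).add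
         (((hasDerivAt_const s (y t)).sub (hyd s hs)).const_mul (Real.sin (θ t))))
      refine h1.congr_deriv ?_
      rw [hθeq s hs, Real.cos_sub]
      ring)
    intro s hs
    have := h s hs
    simp only [sub_zero, hθ10, hx10, hy10, sub_self, mul_zero, add_zero, zero_add,
      zero_sub, neg_zero, sub_zero] at this
    linarith
  -- y1
  have hyeq : ∀ s ∈ Icc (0:ℝ) t,
      y1 s = Real.sin (θ t) * (x t - x (t - s)) - Real.cos (θ t) * (y t - y (t - s)) := by
    have h := key (fun u => y1 u - (Real.sin (θ t) * (x t - x (t - u)) -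
        Real.cos (θ t) * (y t - y (t - u)))) (by
      intro s hs
      have h1 := (hy1 s hs).sub
        ((((hasDerivAt_const s (x t)).sub (hxd s hs)).const_mul (Real.sin (θ t))).sub
         (((hasDerivAt_const s (y t)).sub (hyd s hs)).const_mul (Real.cos (θ t))))
      refine h1.congr_deriv ?_
      rw [hθeq s hs, Real.sin_sub]
      ring)
    intro s hs
    have := h s hs
    simp only [sub_zero, hθ10, hx10, hy10, sub_self, mul_zero, add_zero, zero_add,
      zero_sub, neg_zero, sub_zero] at this
    linarith
  intro s hs
  exact ⟨hθeq s hs, hxeq s hs, hyeq s hs⟩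
end

section
/- Let x, y, θ ∈ ℝ. Then the pair of equations −x cos θ − y sin θ = x and −x sin θ + y cos θ = y holds if and only if x cos(θ/2) + y sin(θ/2) = 0. -/
open Real

theorem eps2_fixed_points (x y θ : ℝ) :
    (-x * Real.cos θ - y * Real.sin θ = x ∧ -x * Real.sin θ + y * Real.cos θ = y) ↔
      x * Real.cos (θ / 2) + y * Real.sin (θ / 2) = 0 := by
  have hθ : θ = 2 * (θ / 2) := by ring
  rw [hθ, Real.cos_two_mul, Real.sin_two_mul]
  have h2' : 2 * (θ / 2) / 2 = θ / 2 := by ring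
  rw [h2']
  have hpy := Real.sin_sq_add_cos_sq (θ / 2)
  set c := Real.cos (θ / 2)
  set s := Real.sin (θ / 2)
  constructor
  · rintro ⟨h1, h2⟩
    linear_combination (-c/2) * h1 - (s/2) * h2 - x*c * hpy
  · intro h
    constructor
    · linear_combination (-2*c) * h
    · linear_combination (-2*s) * h + 2*y * hpy
end

section
/- Let x, y ∈ ℝ and θ ∈ ℝ/2πℤ. The reflection ε⁵ : (x, y, θ) ↦ (−x cos θ − y sin θ, x sin θ − y cos θ, −θ) fixes (x, y, θ) if and only if θ = π (mod 2π) or (x, y, θ) = (0, 0, 0). -/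
open Real

theorem eps5_fixed_points (x y : ℝ) (θ : Real.Angle) :
    (-x * θ.cos - y * θ.sin = x ∧ x * θ.sin - y * θ.cos = y ∧ -θ = θ) ↔
      (θ = (Real.pi : Real.Angle) ∨ (x = 0 ∧ y = 0 ∧ θ = 0)) := by
  constructor
  · rintro ⟨h1, h2, h3⟩
    rcases Real.Angle.neg_eq_self_iff.mp h3 with h0 | hpi
    · subst h0
      simp only [Real.Angle.cos_zero, Real.Angle.sin_zero, mul_one, mul_zero, sub_zero,
        zero_sub] at h1 h2
      right
      constructor
      · linarith
      · constructor
        · linarith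
        · rfl
    · exact Or.inl hpi
  · rintro (hpi | ⟨hx, hy, h0⟩)
    · subst hpi
      rw [Real.Angle.cos_coe, Real.Angle.sin_coe, Real.cos_pi, Real.sin_pi]
      refine ⟨by ring, by ring, Real.Angle.neg_coe_pi⟩
    · subst hx; subst hy; subst h0
      simp
end

section
/- Let k ∈ (0, 1) and let sn, cn, dn : ℝ → ℝ satisfy sn' = cn·dn, cn' = −sn·dn, dn' = −k²·sn·cn with sn(0) = 0, cn(0) = 1, dn(0) = 1, and let E(p) = ∫₀ᵖ dn(t)² dt. Define f₁(p) = cn(p)(E(p) − p) − dn(p) sn(p). Then at every point p where cn(p) ≠ 0, the function g₁ = f₁/cn is differentiable with g₁'(p) = −dn(p)²/cn(p)². In particular g₁ is strictly decreasing on every interval where cn does not vanish. -/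
open Real intervalIntegral Set

theorem g1_decreasing (k : ℝ) (hk : k ∈ Set.Ioo (0 : ℝ) 1) (sn cn dn : ℝ → ℝ)
    (hsn : ∀ t, HasDerivAt sn (cn t * dn t) t)
    (hcn : ∀ t, HasDerivAt cn (-(sn t * dn t)) t)
    (hdn : ∀ t, HasDerivAt dn (-(k ^ 2 * sn t * cn t)) t)
    (hsn0 : sn 0 = 0) (hcn0 : cn 0 = 1) (hdn0 : dn 0 = 1) :
    (∀ p : ℝ, cn p ≠ 0 →
      HasDerivAt
        (fun p => (cn p * ((∫ t in (0:ℝ)..p, (dn t) ^ 2) - p) - dn p * sn p) / cn p)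
        (-(dn p) ^ 2 / (cn p) ^ 2) p) ∧
    (∀ a b : ℝ, (∀ p ∈ Icc a b, cn p ≠ 0) →
      StrictAntiOn
        (fun p => (cn p * ((∫ t in (0:ℝ)..p, (dn t) ^ 2) - p) - dn p * sn p) / cn p)
        (Icc a b)) := by
  obtain ⟨hk0, hk1⟩ := hk
  have hdnc : Continuous dn := by
    refine continuous_iff_continuousAt.mpr fun t => (hdn t).continuousAt
  have hcnc : Continuous cn := by
    refine continuous_iff_continuousAt.mpr fun t => (hcn t).continuousAt
  have hsnc : Continuous sn := by
    refine continuous_iff_continuousAt.mpr fun t => (hsn t).continuousAt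
  have hE : ∀ p : ℝ, HasDerivAt (fun p => ∫ t in (0:ℝ)..p, (dn t) ^ 2) (dn p ^ 2) p := by
    intro p
    exact intervalIntegral.integral_hasDerivAt_right
      ((hdnc.pow 2).intervalIntegrable 0 p)
      ((hdnc.pow 2).stronglyMeasurableAtFilter _ _)
      (hdnc.pow 2).continuousAt
  -- invariants
  have hinv1 : ∀ t, sn t ^ 2 + cn t ^ 2 = 1 := by
    have h : ∀ t, HasDerivAt (fun s => sn s ^ 2 + cn s ^ 2) 0 t := by
      intro t
      have := ((hsn t).pow 2).add ((hcn t).pow 2)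
      refine this.congr_deriv ?_
      norm_num
      ring
    intro t
    have hc := is_const_of_deriv_eq_zero (f := fun s => sn s ^ 2 + cn s ^ 2)
      (fun x => (h x).differentiableAt) (fun x => (h x).deriv) t 0
    simpa [hsn0, hcn0] using hc
  have hinv2 : ∀ t, k ^ 2 * sn t ^ 2 + dn t ^ 2 = 1 := by
    have h : ∀ t, HasDerivAt (fun s => k ^ 2 * sn s ^ 2 + dn s ^ 2) 0 t := by
      intro t
      have := (((hsn t).pow 2).const_mul (k ^ 2)).add ((hdn t).pow 2)
      refine this.congr_deriv ?_
      norm_num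
      ring
    intro t
    have hc := is_const_of_deriv_eq_zero (f := fun s => k ^ 2 * sn s ^ 2 + dn s ^ 2)
      (fun x => (h x).differentiableAt) (fun x => (h x).deriv) t 0
    simpa [hsn0, hdn0] using hc
  have hdnpos : ∀ t, 0 < dn t ^ 2 := by
    intro t
    have e1 := hinv1 t
    have e2 := hinv2 t
    nlinarith [sq_nonneg (cn t), sq_nonneg (sn t), sq_nonneg k]
  have hmain : ∀ p : ℝ, cn p ≠ 0 →
      HasDerivAt
        (fun p => (cn p * ((∫ t in (0:ℝ)..p, (dn t) ^ 2) - p) - dn p * sn p) / cn p)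
        (-(dn p) ^ 2 / (cn p) ^ 2) p := by
    intro p hp
    have hnum : HasDerivAt
        (fun p => cn p * ((∫ t in (0:ℝ)..p, (dn t) ^ 2) - p) - dn p * sn p)
        ((-(sn p * dn p)) * ((∫ t in (0:ℝ)..p, (dn t) ^ 2) - p)
          + cn p * (dn p ^ 2 - 1)
          - ((-(k ^ 2 * sn p * cn p)) * sn p + dn p * (cn p * dn p))) p := by
      exact ((hcn p).mul ((hE p).sub (hasDerivAt_id p))).sub ((hdn p).mul (hsn p))
    have hd := hnum.div (hcn p) hp
    refine hd.congr_deriv (Eq.symm ?_)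
    rw [div_eq_div_iff (by positivity) (by positivity)]
    have e1 := hinv1 p
    have e2 := hinv2 p
    linear_combination (dn p ^ 2 * cn p ^ 2) * e1 - (cn p ^ 4) * e2
  refine ⟨hmain, fun a b hab => ?_⟩
  have hcont : ContinuousOn
      (fun p => (cn p * ((∫ t in (0:ℝ)..p, (dn t) ^ 2) - p) - dn p * sn p) / cn p)
      (Icc a b) :=
    fun x hx => ((hmain x (hab x hx)).differentiableAt.continuousAt).continuousWithinAt
  refine strictAntiOn_of_deriv_neg (convex_Icc a b) hcont ?_
  intro x hx
  have hx' : x ∈ Icc a b := interior_subset hx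
  rw [(hmain x (hab x hx')).deriv]
  have := hdnpos x
  have hne := hab x hx'
  have hc : 0 < cn x ^ 2 := by positivity
  exact div_neg_of_neg_of_pos (by linarith) hc
end

section
/- Let k ∈ (0, 1), let sn, cn, dn be the Jacobi elliptic functions of modulus k (solutions of sn' = cn·dn, cn' = −sn·dn, dn' = −k² sn·cn with sn(0)=0, cn(0)=dn(0)=1), let K be the smallest positive zero of cn, and let E(p) = ∫₀ᵖ dn². Define f₁(p) = cn(p)(E(p) − p) − dn(p) sn(p). Then f₁(p) < 0 for all p ∈ (0, K], and f₁ has at least one zero in the open interval (K, 2K). -/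
open Real intervalIntegral Set

private lemma abs_combo_le (a b x y M : ℝ) (ha : |a| ≤ 1) (hb : |b| ≤ 1)
    (hx : |x| ≤ M) (hy : |y| ≤ M) : |a * x + b * y| ≤ 2 * M := by
  calc |a * x + b * y| ≤ |a * x| + |b * y| := abs_add_le _ _
    _ = |a| * |x| + |b| * |y| := by rw [abs_mul, abs_mul]
    _ ≤ 1 * M + 1 * M := by gcongr
    _ = 2 * M := by ring

theorem f1_sign_and_root (k : ℝ) (hk : k ∈ Set.Ioo (0 : ℝ) 1) (sn cn dn : ℝ → ℝ)
    (hsn : ∀ t, HasDerivAt sn (cn t * dn t) t)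
    (hcn : ∀ t, HasDerivAt cn (-(sn t * dn t)) t)
    (hdn : ∀ t, HasDerivAt dn (-(k ^ 2 * sn t * cn t)) t)
    (hsn0 : sn 0 = 0) (hcn0 : cn 0 = 1) (hdn0 : dn 0 = 1)
    (K : ℝ) (hK : IsLeast {p : ℝ | 0 < p ∧ cn p = 0} K) :
    (∀ p ∈ Ioc (0 : ℝ) K,
      cn p * ((∫ t in (0:ℝ)..p, (dn t) ^ 2) - p) - dn p * sn p < 0) ∧
    (∃ p ∈ Ioo K (2 * K),
      cn p * ((∫ t in (0:ℝ)..p, (dn t) ^ 2) - p) - dn p * sn p = 0) := by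
  obtain ⟨hk0, hk1⟩ := hk
  obtain ⟨⟨hKpos, hcnK⟩, hKleast⟩ := hK
  have hk2 : k ^ 2 < 1 := by nlinarith
  -- continuity
  have hsncont : Continuous sn := Differentiable.continuous fun t => (hsn t).differentiableAt
  have hcncont : Continuous cn := Differentiable.continuous fun t => (hcn t).differentiableAt
  have hdncont : Continuous dn := Differentiable.continuous fun t => (hdn t).differentiableAt
  -- Pythagorean identities
  have hpyth : ∀ t, sn t ^ 2 + cn t ^ 2 = 1 := by
    have h : ∀ t, HasDerivAt (fun t => sn t ^ 2 + cn t ^ 2) 0 t := by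
      intro t
      have := ((hsn t).fun_pow 2).fun_add ((hcn t).fun_pow 2)
      exact this.congr_deriv (by ring)
    have hc := is_const_of_deriv_eq_zero (fun t => (h t).differentiableAt)
      (fun t => (h t).deriv)
    intro t
    have := hc t 0
    simp only [hsn0, hcn0] at this
    linarith [this]
  have hpyth2 : ∀ t, dn t ^ 2 + k ^ 2 * sn t ^ 2 = 1 := by
    have h : ∀ t, HasDerivAt (fun t => dn t ^ 2 + k ^ 2 * sn t ^ 2) 0 t := by
      intro t
      have := ((hdn t).fun_pow 2).fun_add (((hsn t).fun_pow 2).const_mul (k ^ 2))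
      exact this.congr_deriv (by ring)
    have hc := is_const_of_deriv_eq_zero (fun t => (h t).differentiableAt)
      (fun t => (h t).deriv)
    intro t
    have := hc t 0
    simp only [hsn0, hdn0] at this
    nlinarith [this]
  -- bounds
  have hsnle : ∀ t, |sn t| ≤ 1 := by
    intro t; rw [← sq_le_one_iff_abs_le_one]; nlinarith [hpyth t, sq_nonneg (cn t)]
  have hcnle : ∀ t, |cn t| ≤ 1 := by
    intro t; rw [← sq_le_one_iff_abs_le_one]; nlinarith [hpyth t, sq_nonneg (sn t)]
  have hdnle : ∀ t, |dn t| ≤ 1 := by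
    intro t; rw [← sq_le_one_iff_abs_le_one]
    nlinarith [hpyth2 t, sq_nonneg (sn t), sq_nonneg k]
  -- dn is positive everywhere
  have hdnsq : ∀ t, 1 - k ^ 2 ≤ dn t ^ 2 := by
    intro t
    have h1 : sn t ^ 2 ≤ 1 := by nlinarith [hpyth t, sq_nonneg (cn t)]
    nlinarith [hpyth2 t, sq_nonneg k]
  have hdnpos : ∀ t, 0 < dn t := by
    intro t
    by_contra h
    push_neg at h
    have h0 : (0 : ℝ) ∈ uIcc (dn 0) (dn t) := by
      rw [hdn0]; exact mem_uIcc.2 (Or.inr ⟨h, zero_le_one⟩)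
    obtain ⟨c, _, hc⟩ := intermediate_value_uIcc (hdncont.continuousOn) h0
    have := hdnsq c
    rw [hc] at this
    nlinarith
  -- cn is positive on [0, K)
  have hcnpos : ∀ p, 0 ≤ p → p < K → 0 < cn p := by
    intro p hp0 hpK
    rcases eq_or_lt_of_le hp0 with rfl | hp0'
    · rw [hcn0]; norm_num
    by_contra h
    push_neg at h
    rcases eq_or_lt_of_le h with hz | hneg
    · exact absurd (hKleast ⟨hp0', hz⟩) (not_le.2 hpK)
    · have h0 : (0 : ℝ) ∈ Ioo (cn p) (cn 0) := by rw [hcn0]; exact ⟨hneg, one_pos⟩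
      obtain ⟨c, hcmem, hc⟩ := intermediate_value_Ioo' (le_of_lt hp0')
        hcncont.continuousOn h0
      exact absurd (hKleast ⟨hcmem.1, hc⟩) (not_le.2 (hcmem.2.trans hpK))
  -- sn is positive on (0, K]
  have hsnmono : StrictMonoOn sn (Icc 0 K) := by
    apply strictMonoOn_of_deriv_pos (convex_Icc 0 K) hsncont.continuousOn
    intro x hx
    rw [interior_Icc] at hx
    rw [(hsn x).deriv]
    exact mul_pos (hcnpos x hx.1.le hx.2) (hdnpos x)
  have hsnpos : ∀ p, 0 < p → p ≤ K → 0 < sn p := by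
    intro p hp0 hpK
    have := hsnmono (left_mem_Icc.2 hKpos.le) ⟨hp0.le, hpK⟩ hp0
    rwa [hsn0] at this
  have hsnK : sn K = 1 := by
    have h1 : (sn K - 1) * (sn K + 1) = 0 := by nlinarith [hpyth K]
    rcases mul_eq_zero.1 h1 with h | h
    · linarith
    · have := hsnpos K hKpos le_rfl; linarith
  -- the integral E
  have hint : ∀ a b : ℝ, IntervalIntegrable (fun t => dn t ^ 2) MeasureTheory.volume a b :=
    fun a b => ((hdncont.pow 2).intervalIntegrable a b)
  have hEcont : Continuous fun p => ∫ t in (0:ℝ)..p, dn t ^ 2 :=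
    intervalIntegral.continuous_primitive hint 0
  have hEle : ∀ p, 0 ≤ p → (∫ t in (0:ℝ)..p, dn t ^ 2) ≤ p := by
    intro p hp
    have h1 : (∫ t in (0:ℝ)..p, dn t ^ 2) ≤ ∫ t in (0:ℝ)..p, (1:ℝ) := by
      apply intervalIntegral.integral_mono_on hp (hint 0 p)
        (intervalIntegrable_const)
      intro x _
      rw [sq_le_one_iff_abs_le_one]
      exact hdnle x
    simpa using h1
  -- Part 1
  have part1 : ∀ p ∈ Ioc (0 : ℝ) K,
      cn p * ((∫ t in (0:ℝ)..p, (dn t) ^ 2) - p) - dn p * sn p < 0 := by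
    rintro p ⟨hp0, hpK⟩
    have hcnp : 0 ≤ cn p := by
      rcases eq_or_lt_of_le hpK with rfl | hlt
      · rw [hcnK]
      · exact (hcnpos p hp0.le hlt).le
    have hEp : (∫ t in (0:ℝ)..p, dn t ^ 2) - p ≤ 0 := by
      have := hEle p hp0.le; linarith
    have h1 : cn p * ((∫ t in (0:ℝ)..p, dn t ^ 2) - p) ≤ 0 := mul_nonpos_of_nonneg_of_nonpos hcnp hEp
    have h2 : 0 < dn p * sn p := mul_pos (hdnpos p) (hsnpos p hp0 hpK)
    linarith
  refine ⟨part1, ?_⟩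
  -- Symmetry via Gronwall: sn (2K)=0, cn (2K)=-1, dn (2K)=1
  have hder_add : ∀ (f : ℝ → ℝ) (f' : ℝ → ℝ), (∀ t, HasDerivAt f (f' t) t) →
      ∀ t : ℝ, HasDerivAt (fun t => f (K + t)) (f' (K + t)) t := by
    intro f f' hf t
    have := (hf (K + t)).comp t ((hasDerivAt_id t).const_add K)
    simpa [Function.comp_def] using this
  have hder_sub : ∀ (f : ℝ → ℝ) (f' : ℝ → ℝ), (∀ t, HasDerivAt f (f' t) t) →
      ∀ t : ℝ, HasDerivAt (fun t => f (K - t)) (-(f' (K - t))) t := by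
    intro f f' hf t
    have := (hf (K - t)).comp t ((hasDerivAt_id t).const_sub K)
    simpa [Function.comp_def] using this
  set P : ℝ → ℝ := fun t => sn (K + t) - sn (K - t) with hP
  set Q : ℝ → ℝ := fun t => cn (K + t) + cn (K - t) with hQ
  set R : ℝ → ℝ := fun t => dn (K + t) - dn (K - t) with hR
  set F : ℝ → ℝ × ℝ × ℝ := fun t => (P t, Q t, R t) with hF
  set F' : ℝ → ℝ × ℝ × ℝ := fun t =>
    (cn (K + t) * R t + dn (K - t) * Q t,
     (-(sn (K + t))) * R t + (-(dn (K - t))) * P t,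
     (-(k ^ 2 * sn (K + t))) * Q t + (k ^ 2 * cn (K - t)) * P t) with hF'
  have hFderiv : ∀ t, HasDerivAt F (F' t) t := by
    intro t
    have hPd : HasDerivAt P (cn (K + t) * R t + dn (K - t) * Q t) t := by
      have := (hder_add sn (fun u => cn u * dn u) hsn t).fun_sub
        (hder_sub sn (fun u => cn u * dn u) hsn t)
      exact this.congr_deriv (by simp only [hQ, hR]; ring)
    have hQd : HasDerivAt Q ((-(sn (K + t))) * R t + (-(dn (K - t))) * P t) t := by
      have := (hder_add cn (fun u => -(sn u * dn u)) hcn t).fun_add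
        (hder_sub cn (fun u => -(sn u * dn u)) hcn t)
      exact this.congr_deriv (by simp only [hP, hR]; ring)
    have hRd : HasDerivAt R ((-(k ^ 2 * sn (K + t))) * Q t + (k ^ 2 * cn (K - t)) * P t) t := by
      have := (hder_add dn (fun u => -(k ^ 2 * sn u * cn u)) hdn t).fun_sub
        (hder_sub dn (fun u => -(k ^ 2 * sn u * cn u)) hdn t)
      exact this.congr_deriv (by simp only [hP, hQ]; ring)
    exact hPd.prodMk (hQd.prodMk hRd)
  have hF0 : F 0 = 0 := by
    simp only [hF, hP, hQ, hR, add_zero, sub_zero, hcnK]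
    norm_num
  have hFbound : ∀ t : ℝ, ‖F' t‖ ≤ 2 * ‖F t‖ := by
    intro t
    have hPle : |P t| ≤ ‖F t‖ := norm_fst_le (F t)
    have hQle : |Q t| ≤ ‖F t‖ := (norm_fst_le ((F t).2)).trans (norm_snd_le (F t))
    have hRle : |R t| ≤ ‖F t‖ := (norm_snd_le ((F t).2)).trans (norm_snd_le (F t))
    have hb1 : |cn (K + t) * R t + dn (K - t) * Q t| ≤ 2 * ‖F t‖ :=
      abs_combo_le _ _ _ _ _ (hcnle _) (hdnle _) hRle hQle
    have hb2 : |(-(sn (K + t))) * R t + (-(dn (K - t))) * P t| ≤ 2 * ‖F t‖ :=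
      abs_combo_le _ _ _ _ _ (by rw [abs_neg]; exact hsnle _)
        (by rw [abs_neg]; exact hdnle _) hRle hPle
    have hb3 : |(-(k ^ 2 * sn (K + t))) * Q t + (k ^ 2 * cn (K - t)) * P t| ≤ 2 * ‖F t‖ := by
      apply abs_combo_le _ _ _ _ _ _ _ hQle hPle
      · rw [abs_neg, abs_mul, abs_of_nonneg (sq_nonneg k)]
        nlinarith [hsnle (K + t), abs_nonneg (sn (K + t)), sq_nonneg k]
      · rw [abs_mul, abs_of_nonneg (sq_nonneg k)]
        nlinarith [hcnle (K - t), abs_nonneg (cn (K - t)), sq_nonneg k]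
    have hnorm : ∀ a b c : ℝ, ‖((a, b, c) : ℝ × ℝ × ℝ)‖ = max |a| (max |b| |c|) := by
      intro a b c
      rw [Prod.norm_def, Prod.norm_def]
      simp [Real.norm_eq_abs]
    simp only [hF']
    rw [hnorm]
    exact max_le hb1 (max_le hb2 hb3)
  have hFK : F K = 0 := by
    have key := norm_le_gronwallBound_of_norm_deriv_right_le
      (f := F) (f' := F') (δ := 0) (K := 2) (ε := 0) (a := 0) (b := K)
      (Continuous.continuousOn
        (Differentiable.continuous fun t => (hFderiv t).differentiableAt))
      (fun x _ => (hFderiv x).hasDerivWithinAt)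
      (by rw [hF0]; simp)
      (fun x _ => by simpa using hFbound x)
    have := key K ⟨hKpos.le, le_rfl⟩
    rw [gronwallBound_ε0_δ0] at this
    exact norm_le_zero_iff.1 this
  have hPK : P K = 0 := by
    have := congrArg Prod.fst hFK; simpa [hF] using this
  have hQK : Q K = 0 := by
    have := congrArg (fun x : ℝ × ℝ × ℝ => x.2.1) hFK; simpa [hF] using this
  have hRK : R K = 0 := by
    have := congrArg (fun x : ℝ × ℝ × ℝ => x.2.2) hFK; simpa [hF] using this
  have hsn2K : sn (2 * K) = 0 := by
    have h1 : sn (K + K) - sn (K - K) = 0 := hPK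
    rw [sub_self, hsn0, sub_zero, ← two_mul] at h1
    exact h1
  have hcn2K : cn (2 * K) = -1 := by
    have h1 : cn (K + K) + cn (K - K) = 0 := hQK
    rw [sub_self, hcn0, ← two_mul] at h1
    linarith
  have hdn2K : dn (2 * K) = 1 := by
    have h1 : dn (K + K) - dn (K - K) = 0 := hRK
    rw [sub_self, hdn0, ← two_mul] at h1
    linarith
  -- E (2K) < 2K strictly
  have hK2 : (0 : ℝ) < 2 * K := by linarith
  have hElt : (∫ t in (0:ℝ)..(2 * K), dn t ^ 2) < 2 * K := by
    have h1 : (∫ t in (0:ℝ)..(2 * K), dn t ^ 2) < ∫ t in (0:ℝ)..(2 * K), (1:ℝ) := by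
      apply intervalIntegral.integral_lt_integral_of_continuousOn_of_le_of_exists_lt hK2
        ((hdncont.pow 2).continuousOn) continuousOn_const
      · intro x _
        rw [Pi.pow_apply, sq_le_one_iff_abs_le_one]
        exact hdnle x
      · refine ⟨K, ⟨hKpos.le, by linarith⟩, ?_⟩
        have := hpyth2 K
        rw [hsnK] at this
        rw [Pi.pow_apply]
        nlinarith
    simpa using h1
  -- the function f₁
  set g : ℝ → ℝ := fun p => cn p * ((∫ t in (0:ℝ)..p, dn t ^ 2) - p) - dn p * sn p with hg
  have hgcont : Continuous g := by
    apply Continuous.sub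
    · exact hcncont.mul (hEcont.sub continuous_id)
    · exact hdncont.mul hsncont
  have hgK : g K < 0 := part1 K ⟨hKpos, le_rfl⟩
  have hg2K : 0 < g (2 * K) := by
    simp only [hg, hcn2K, hsn2K, hdn2K]
    nlinarith [hElt]
  have h0mem : (0 : ℝ) ∈ Ioo (g K) (g (2 * K)) := ⟨hgK, hg2K⟩
  obtain ⟨p, hpmem, hp⟩ := intermediate_value_Ioo (by linarith : K ≤ 2 * K)
    hgcont.continuousOn h0mem
  exact ⟨p, hpmem, hp⟩
end

section
/- Let γ, θ, x, y : ℝ → ℝ solve θ' = −cos(γ/2), x' = sin(γ/2) cos θ, y' = sin(γ/2) sin θ, where γ is continuously differentiable. At every time t where sin(γ(t)/2) ≠ 0, the signed curvature of the plane curve s ↦ (x(s), y(s)), namely κ = (x'y'' − y'x'')/((x')² + (y')²)^{3/2}, equals −cot(γ(t)/2) · sign(sin(γ(t)/2)). -/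
open Real

theorem geodesic_curvature (γ γ' θ x y x2 y2 : ℝ → ℝ)
    (hγ : ∀ t, HasDerivAt γ (γ' t) t) (hγ'cont : Continuous γ')
    (hθ : ∀ t, HasDerivAt θ (-Real.cos (γ t / 2)) t)
    (hx : ∀ t, HasDerivAt x (Real.sin (γ t / 2) * Real.cos (θ t)) t)
    (hy : ∀ t, HasDerivAt y (Real.sin (γ t / 2) * Real.sin (θ t)) t)
    (hx2 : ∀ t, HasDerivAt (fun s => Real.sin (γ s / 2) * Real.cos (θ s)) (x2 t) t)
    (hy2 : ∀ t, HasDerivAt (fun s => Real.sin (γ s / 2) * Real.sin (θ s)) (y2 t) t) :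
    ∀ t : ℝ, Real.sin (γ t / 2) ≠ 0 →
      (Real.sin (γ t / 2) * Real.cos (θ t) * y2 t
          - Real.sin (γ t / 2) * Real.sin (θ t) * x2 t) /
        ((Real.sin (γ t / 2) * Real.cos (θ t)) ^ 2
          + (Real.sin (γ t / 2) * Real.sin (θ t)) ^ 2) ^ ((3 : ℝ) / 2)
      = -(Real.cos (γ t / 2) / Real.sin (γ t / 2)) * Real.sign (Real.sin (γ t / 2)) := by
  intro t hs
  set s := Real.sin (γ t / 2) with hs_def
  set c := Real.cos (γ t / 2) with hc_def
  -- derivative of sin(γ/2)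
  have hsg : HasDerivAt (fun u => Real.sin (γ u / 2)) (c * (γ' t / 2)) t := by
    have h1 : HasDerivAt (fun u => γ u / 2) (γ' t / 2) t := (hγ t).div_const 2
    exact (Real.hasDerivAt_sin (γ t / 2)).comp t h1
  -- derivative of cos θ, sin θ
  have hcθ : HasDerivAt (fun u => Real.cos (θ u)) (-Real.sin (θ t) * (-c)) t :=
    (Real.hasDerivAt_cos (θ t)).comp t (hθ t)
  have hsθ : HasDerivAt (fun u => Real.sin (θ u)) (Real.cos (θ t) * (-c)) t :=
    (Real.hasDerivAt_sin (θ t)).comp t (hθ t)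
  have hx2' : x2 t = c * (γ' t / 2) * Real.cos (θ t) + s * (-Real.sin (θ t) * (-c)) :=
    (hx2 t).unique (hsg.mul hcθ)
  have hy2' : y2 t = c * (γ' t / 2) * Real.sin (θ t) + s * (Real.cos (θ t) * (-c)) :=
    (hy2 t).unique (hsg.mul hsθ)
  have hnum : s * Real.cos (θ t) * y2 t - s * Real.sin (θ t) * x2 t = -(s ^ 2 * c) := by
    rw [hx2', hy2']
    have hpyth := Real.sin_sq_add_cos_sq (θ t)
    linear_combination (-(s ^ 2 * c)) * hpyth
  have hden : (s * Real.cos (θ t)) ^ 2 + (s * Real.sin (θ t)) ^ 2 = s ^ 2 := by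
    have hpyth := Real.sin_sq_add_cos_sq (θ t)
    nlinarith [hpyth]
  rw [hnum, hden]
  have habs : (s ^ 2 : ℝ) ^ ((3 : ℝ) / 2) = |s| ^ 3 := by
    rw [← sq_abs, ← Real.rpow_natCast |s| 2, ← Real.rpow_mul (abs_nonneg _)]
    norm_num
  rw [habs]
  have habs_ne : |s| ≠ 0 := abs_ne_zero.mpr hs
  clear_value s c
  rcases lt_or_gt_of_ne hs with hneg | hpos
  · rw [Real.sign_of_neg hneg, abs_of_neg hneg,
      show -(c / s) * (-1) = c / s by ring,
      div_eq_div_iff (pow_ne_zero 3 (neg_ne_zero.mpr hs)) hs]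
    ring
  · rw [Real.sign_of_pos hpos, abs_of_pos hpos, mul_one, ← neg_div,
      div_eq_div_iff (pow_ne_zero 3 hs) hs]
    ring
end
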